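/- Let q₀ ∈ (0, 1/2) and let δ satisfy 0 < δ ≤ (1/2 − q₀)²/(2·q₀·(1 − q₀)) and δ ≤ log(1/q₀). Let γ* ∈ (q₀, 1] be the unique root of Φ(γ) = δ, where Φ(γ) = γ·log(γ/q₀) + (1 − γ)·log((1 − γ)/(1 − q₀)) (with Φ(1) = log(1/q₀) by the convention 0·log 0 = 0). Then the Cactus approximate solution γ̂ = q₀ + √(2·δ·q₀·(1 − q₀)) satisfies γ̂ ≤ γ*; that is, when the exact solution does not exceed 1/2, the approximation never overestimates the exact solution. -/

import Mathlib

lemma log_le_half_sub_inv {u : ℝ} (hu : 1 ≤ u) : Real.log u ≤ (u - u⁻¹) / 2 := by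
  have key : ∀ x ∈ Set.Ici (1:ℝ), HasDerivAt (fun x : ℝ => (x - x⁻¹)/2 - Real.log x)
      ((1 - -(x^2)⁻¹)/2 - x⁻¹) x := by
    intro x hx
    have hx0 : x ≠ 0 := by simp at hx; linarith
    exact (((hasDerivAt_id x).sub (hasDerivAt_inv hx0)).div_const 2).sub
      (Real.hasDerivAt_log hx0)
  have mono : MonotoneOn (fun x : ℝ => (x - x⁻¹)/2 - Real.log x) (Set.Ici 1) := by
    apply monotoneOn_of_deriv_nonneg (convex_Ici 1)
    · exact fun x hx => ((key x hx).continuousAt).continuousWithinAt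
    · intro x hx
      rw [interior_Ici] at hx
      exact ((key x (Set.Ioi_subset_Ici_self hx)).differentiableAt).differentiableWithinAt
    · intro x hx
      rw [interior_Ici] at hx
      rw [(key x (Set.Ioi_subset_Ici_self hx)).deriv]
      have hx0 : (0:ℝ) < x := by linarith [Set.mem_Ioi.mp hx]
      have : (0:ℝ) < x^2 := by positivity
      have h : (1 - -(x ^ 2)⁻¹) / 2 - x⁻¹ = (x-1)^2 / (2*x^2) := by
        field_simp; ring
      rw [h]
      positivity
  have h1 : (fun x : ℝ => (x - x⁻¹)/2 - Real.log x) 1 ≤ (fun x : ℝ => (x - x⁻¹)/2 - Real.log x) u :=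
    mono (by simp) hu hu
  simp at h1
  linarith

lemma quad_bound {q₀ γ : ℝ} (h0 : 0 < q₀) (h2 : q₀ < 1/2) (hγ1 : q₀ ≤ γ) (hγ2 : γ ≤ 1/2) :
    γ * (Real.log γ - Real.log q₀) + (1 - γ) * (Real.log (1-γ) - Real.log (1-q₀))
      ≤ (γ - q₀)^2 / (2 * q₀ * (1 - q₀)) := by
  set f : ℝ → ℝ := fun x => (x - q₀)^2 / (2*q₀*(1-q₀)) -
    (x * (Real.log x - Real.log q₀) + (1-x) * (Real.log (1-x) - Real.log (1-q₀))) with hf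
  have key : ∀ x ∈ Set.Icc q₀ (1/2:ℝ), HasDerivAt f
      ((x - q₀)/(q₀*(1-q₀)) - (Real.log x - Real.log q₀) + (Real.log (1-x) - Real.log (1-q₀))) x := by
    intro x hx
    obtain ⟨hxl, hxr⟩ := hx
    have hx0 : x ≠ 0 := ne_of_gt (lt_of_lt_of_le h0 hxl)
    have hq0 : q₀ ≠ 0 := ne_of_gt h0
    have hq1 : (1:ℝ) - q₀ ≠ 0 := by intro h; nlinarith
    have h1x : (1:ℝ) - x ≠ 0 := by intro h; linarith [h.symm.le]
    have d1 : HasDerivAt (fun x : ℝ => (x - q₀)^2 / (2*q₀*(1-q₀)))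
        (2*(x-q₀)^1*1 / (2*q₀*(1-q₀))) x :=
      (((hasDerivAt_id x).sub_const q₀).pow 2).div_const _
    have d2 : HasDerivAt (fun x : ℝ => x * (Real.log x - Real.log q₀))
        (1 * (Real.log x - Real.log q₀) + x * x⁻¹) x :=
      (hasDerivAt_id x).mul ((Real.hasDerivAt_log hx0).sub_const _)
    have dl : HasDerivAt (fun x : ℝ => Real.log (1 - x)) ((1-x)⁻¹ * (0 - 1)) x := by
      exact (Real.hasDerivAt_log h1x).comp x ((hasDerivAt_const x 1).sub (hasDerivAt_id x))
    have d3 : HasDerivAt (fun x : ℝ => (1-x) * (Real.log (1-x) - Real.log (1-q₀)))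
        ((0-1) * (Real.log (1-x) - Real.log (1-q₀)) + (1-x) * ((1-x)⁻¹ * (0-1))) x :=
      ((hasDerivAt_const x 1).sub (hasDerivAt_id x)).mul (dl.sub_const _)
    have := d1.sub (d2.add d3)
    convert this using 1
    · rfl
    · rfl
    · rfl
    have : (1:ℝ) - x ≠ 0 := h1x
    field_simp
    ring
  have mono : MonotoneOn f (Set.Icc q₀ (1/2)) := by
    apply monotoneOn_of_deriv_nonneg (convex_Icc _ _)
    · exact fun x hx => ((key x hx).continuousAt).continuousWithinAt
    · intro x hx
      rw [interior_Icc] at hx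
      exact ((key x (Set.mem_Icc_of_Ioo hx)).differentiableAt).differentiableWithinAt
    · intro x hx
      rw [interior_Icc] at hx
      obtain ⟨hxl, hxr⟩ := hx
      rw [(key x (Set.mem_Icc_of_Ioo ⟨hxl, hxr⟩)).deriv]
      have hx0 : (0:ℝ) < x := lt_trans h0 hxl
      have h1x : (0:ℝ) < 1 - x := by linarith
      have h1q : (0:ℝ) < 1 - q₀ := by linarith
      set u : ℝ := (x * (1-q₀)) / (q₀ * (1-x)) with hu
      have hu1 : 1 ≤ u := by
        rw [hu, le_div_iff₀ (by positivity)]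
        nlinarith
      have hlog : Real.log x - Real.log q₀ - (Real.log (1-x) - Real.log (1-q₀)) = Real.log u := by
        rw [hu, Real.log_div (by positivity) (by positivity),
          Real.log_mul (by positivity) (by positivity),
          Real.log_mul (by positivity) (by positivity)]
        ring
      have hineq := log_le_half_sub_inv hu1
      have halg : (u - u⁻¹)/2 ≤ (x - q₀)/(q₀*(1-q₀)) := by
        rw [hu, inv_div]
        rw [div_sub_div _ _ (by positivity) (by positivity), div_div,
          div_le_div_iff₀ (by positivity) (by positivity)]
        nlinarith [mul_nonneg (mul_nonneg (sq_nonneg (x - q₀)) (by linarith : (0:ℝ) ≤ 1 - 2*x))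
          (le_of_lt (mul_pos h0 h1q))]
      linarith
  have h0' : f q₀ ≤ f γ := mono ⟨le_refl _, h2.le⟩ ⟨hγ1, hγ2⟩ hγ1
  have : f q₀ = 0 := by simp [hf]
  rw [this] at h0'
  simp only [hf] at h0'
  linarith
theorem stmt_16 (q₀ δ : ℝ) (hq₀ : q₀ ∈ Set.Ioo (0 : ℝ) (1 / 2))
    (hδ0 : 0 < δ) (hδ1 : δ ≤ (1 / 2 - q₀) ^ 2 / (2 * q₀ * (1 - q₀)))
    (hδ2 : δ ≤ Real.log (1 / q₀))
    (γstar : ℝ) (hmem : γstar ∈ Set.Ioc q₀ 1)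
    (hroot : γstar * Real.log (γstar / q₀) +
      (1 - γstar) * Real.log ((1 - γstar) / (1 - q₀)) = δ) :
    q₀ + Real.sqrt (2 * δ * q₀ * (1 - q₀)) ≤ γstar := by
  obtain ⟨hq0, hq2⟩ := hq₀
  obtain ⟨hγl, hγu⟩ := hmem
  have h1q : (0:ℝ) < 1 - q₀ := by linarith
  have hpos : (0:ℝ) < 2 * q₀ * (1 - q₀) := by positivity
  rcases le_or_gt γstar (1/2) with hc | hc
  · -- γ* ≤ 1/2 : use the quadratic upper bound on Φ
    have hγ0 : (0:ℝ) < γstar := lt_trans hq0 hγl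
    have h1γ : (0:ℝ) < 1 - γstar := by linarith
    have hΦ : γstar * (Real.log γstar - Real.log q₀)
        + (1 - γstar) * (Real.log (1-γstar) - Real.log (1-q₀))
        ≤ (γstar - q₀)^2 / (2 * q₀ * (1 - q₀)) :=
      quad_bound hq0 hq2 hγl.le hc
    have heq : γstar * Real.log (γstar / q₀) +
        (1 - γstar) * Real.log ((1 - γstar) / (1 - q₀)) =
        γstar * (Real.log γstar - Real.log q₀)
        + (1 - γstar) * (Real.log (1-γstar) - Real.log (1-q₀)) := by
      rw [Real.log_div (ne_of_gt hγ0) (ne_of_gt hq0),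
        Real.log_div (ne_of_gt h1γ) (ne_of_gt h1q)]
    rw [← heq, hroot] at hΦ
    have h2 : 2 * δ * q₀ * (1 - q₀) ≤ (γstar - q₀)^2 := by
      rw [le_div_iff₀ hpos] at hΦ; nlinarith
    have h3 : Real.sqrt (2 * δ * q₀ * (1 - q₀)) ≤ γstar - q₀ := by
      calc Real.sqrt (2 * δ * q₀ * (1 - q₀)) ≤ Real.sqrt ((γstar - q₀)^2) :=
            Real.sqrt_le_sqrt h2
        _ = γstar - q₀ := by
            rw [Real.sqrt_sq (by linarith : (0:ℝ) ≤ γstar - q₀)]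
    linarith
  · -- γ* > 1/2 : the hypothesis hδ1 bounds the sqrt by 1/2 - q₀
    have h2 : 2 * δ * q₀ * (1 - q₀) ≤ (1/2 - q₀)^2 := by
      rw [le_div_iff₀ hpos] at hδ1; nlinarith
    have h3 : Real.sqrt (2 * δ * q₀ * (1 - q₀)) ≤ 1/2 - q₀ := by
      calc Real.sqrt (2 * δ * q₀ * (1 - q₀)) ≤ Real.sqrt ((1/2 - q₀)^2) :=
            Real.sqrt_le_sqrt h2
        _ = 1/2 - q₀ := by rw [Real.sqrt_sq (by linarith : (0:ℝ) ≤ 1/2 - q₀)]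
    linarith
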